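/- arXiv:2106.08196 — 6 statements merged into one kernel-verified Lean document; each statement's English description precedes it below -/
import Mathlib

section
/- Let λ > 0 and let F = (F_n) be a sequence of nonempty finite subsets of ℕ such that for each m ∈ ℕ, the number of indices n with |F_n| = m is at most 2^{λm}. Then the submeasure d_F on subsets of ℕ defined by d_F(A) = limsup_{n→∞} |A ∩ F_n| / |F_n| is nonatomic; that is, for every ε > 0 there exists a finite partition (A_i)_{i∈I} of ℕ such that d_F(A_i) ≤ ε for every i ∈ I. -/
open Filter Set

section Aux

lemma cyl_card {α : Type} [Fintype α] [DecidableEq α] (k : ℕ) (T : Finset α) (j : Fin k) :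
    ((Finset.univ : Finset (α → Fin k)).filter fun c => ∀ x ∈ T, c x = j).card
      ≤ k ^ (Fintype.card α - T.card) := by
  classical
  have h : ((Finset.univ : Finset (α → Fin k)).filter fun c => ∀ x ∈ T, c x = j).card
      ≤ (Finset.univ : Finset ({y : α // y ∉ T} → Fin k)).card := by
    apply Finset.card_le_card_of_injOn (fun c => fun y => c y.1) (fun _ _ => Finset.mem_univ _)
    intro c₁ h₁ c₂ h₂ h
    simp only [Finset.mem_coe, Finset.mem_filter] at h₁ h₂
    funext x
    by_cases hx : x ∈ T
    · rw [h₁.2 x hx, h₂.2 x hx]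
    · exact congrFun h ⟨x, hx⟩
  refine h.trans_eq ?_
  rw [Finset.card_univ, Fintype.card_fun, Fintype.card_fin]
  congr 1
  have h2 : Fintype.card {y : α // y ∉ T} = Fintype.card α - Fintype.card {y : α // y ∈ T} :=
    Fintype.card_subtype_compl _
  rw [h2, Fintype.card_coe]

lemma tail_card {α : Type} [Fintype α] [DecidableEq α] (k : ℕ) (Fn : Finset α) (j : Fin k)
    (t : ℕ) :
    ((Finset.univ : Finset (α → Fin k)).filter fun c => t ≤ (Fn.filter fun x => c x = j).card).card
      ≤ Fn.card.choose t * k ^ (Fintype.card α - t) := by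
  classical
  have hsub : ((Finset.univ : Finset (α → Fin k)).filter
        fun c => t ≤ (Fn.filter fun x => c x = j).card)
      ⊆ (Fn.powersetCard t).biUnion
        (fun T => (Finset.univ : Finset (α → Fin k)).filter fun c => ∀ x ∈ T, c x = j) := by
    intro c hc
    rw [Finset.mem_filter] at hc
    obtain ⟨T, hT, hTcard⟩ := Finset.exists_subset_card_eq hc.2
    refine Finset.mem_biUnion.2 ⟨T, ?_, ?_⟩
    · exact Finset.mem_powersetCard.2 ⟨hT.trans (Finset.filter_subset _ _), hTcard⟩
    · refine Finset.mem_filter.2 ⟨Finset.mem_univ _, fun x hx => ?_⟩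
      exact (Finset.mem_filter.1 (hT hx)).2
  calc _ ≤ _ := Finset.card_le_card hsub
    _ ≤ ∑ T ∈ Fn.powersetCard t, ((Finset.univ : Finset (α → Fin k)).filter
          fun c => ∀ x ∈ T, c x = j).card := Finset.card_biUnion_le
    _ ≤ ∑ T ∈ Fn.powersetCard t, k ^ (Fintype.card α - t) := by
        refine Finset.sum_le_sum fun T hT => ?_
        have h := cyl_card k T j
        rwa [(Finset.mem_powersetCard.1 hT).2] at h
    _ = Fn.card.choose t * k ^ (Fintype.card α - t) := by
        rw [Finset.sum_const, Finset.card_powersetCard, smul_eq_mul]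

lemma card_filter_val {S : Finset ℕ} (s : Finset ℕ) (hs : s ⊆ S) (p : ℕ → Prop) [DecidablePred p] :
    ((Finset.univ : Finset {x // x ∈ S}).filter fun x => x.1 ∈ s ∧ p x.1).card
      = (s.filter p).card := by
  classical
  apply Finset.card_bij (fun x _ => x.1)
  · intro a ha
    rw [Finset.mem_filter] at ha ⊢
    exact ⟨ha.2.1, ha.2.2⟩
  · intro a ha b hb h
    exact Subtype.ext h
  · intro b hb
    rw [Finset.mem_filter] at hb
    exact ⟨⟨b, hs hb.1⟩, Finset.mem_filter.2 ⟨Finset.mem_univ _, hb.1, hb.2⟩, rfl⟩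

lemma exists_good (k : ℕ) (hk : 1 ≤ k) (F : ℕ → Finset ℕ) (t : ℕ → ℕ) (G : Finset ℕ)
    (htF : ∀ n ∈ G, t n ≤ (F n).card)
    (hsum : ∑ n ∈ G, (k : ℝ) * ((F n).card.choose (t n) : ℝ) * ((k : ℝ)⁻¹) ^ (t n) < 1) :
    ∃ c : ℕ → Fin k, ∀ n ∈ G, ∀ j : Fin k, ((F n).filter fun x => c x = j).card < t n := by
  classical
  set S : Finset ℕ := G.biUnion F with hS
  have hFS : ∀ n ∈ G, F n ⊆ S := fun n hn => Finset.subset_biUnion_of_mem F hn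
  set α := {x // x ∈ S} with hα
  have hcardα : Fintype.card α = S.card := Fintype.card_coe S
  have hk0 : (k:ℝ) ≠ 0 := by positivity
  set Bad : Finset (α → Fin k) := Finset.univ.filter
    (fun c => ∃ n ∈ G, ∃ j : Fin k,
      t n ≤ ((Finset.univ : Finset α).filter fun x => x.1 ∈ F n ∧ c x = j).card) with hBad
  have hcardBad : (Bad.card : ℝ) < (k : ℝ) ^ S.card := by
    have hsub : Bad ⊆ G.biUnion (fun n => (Finset.univ : Finset (Fin k)).biUnion
        (fun j => Finset.univ.filter
          (fun c : α → Fin k => t n ≤ (((Finset.univ : Finset α).filter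
            fun x => x.1 ∈ F n) |>.filter fun x => c x = j).card))) := by
      intro c hc
      rw [hBad, Finset.mem_filter] at hc
      obtain ⟨-, n, hn, j, hj⟩ := hc
      refine Finset.mem_biUnion.2 ⟨n, hn, Finset.mem_biUnion.2 ⟨j, Finset.mem_univ _, ?_⟩⟩
      rw [Finset.mem_filter, Finset.filter_filter]
      exact ⟨Finset.mem_univ _, hj⟩
    have h1 : Bad.card ≤ ∑ n ∈ G, ∑ _j : Fin k,
        ((F n).card.choose (t n)) * k ^ (S.card - t n) := by
      calc Bad.card ≤ _ := Finset.card_le_card hsub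
        _ ≤ ∑ n ∈ G, ((Finset.univ : Finset (Fin k)).biUnion
            (fun j => Finset.univ.filter
              (fun c : α → Fin k => t n ≤ (((Finset.univ : Finset α).filter
                fun x => x.1 ∈ F n) |>.filter fun x => c x = j).card))).card :=
          Finset.card_biUnion_le
        _ ≤ _ := by
          refine Finset.sum_le_sum fun n hn => ?_
          calc _ ≤ ∑ j : Fin k, (Finset.univ.filter
                (fun c : α → Fin k => t n ≤ (((Finset.univ : Finset α).filter
                  fun x => x.1 ∈ F n) |>.filter fun x => c x = j).card)).card :=
              Finset.card_biUnion_le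
            _ ≤ _ := by
              refine Finset.sum_le_sum fun j _ => ?_
              have h := tail_card k (((Finset.univ : Finset α)).filter fun x => x.1 ∈ F n) j (t n)
              have hcc : (((Finset.univ : Finset α)).filter fun x => x.1 ∈ F n).card
                  = (F n).card := by
                have h2 := card_filter_val (S := S) (F n) (hFS n hn) (fun _ => True)
                simpa only [and_true, Finset.filter_true] using h2
              rwa [hcc, hcardα] at h
    have h1' : (Bad.card : ℝ) ≤ ∑ n ∈ G, (k:ℝ) *
        (((F n).card.choose (t n)) : ℝ) * (k:ℝ) ^ (S.card - t n) := by
      have h := (Nat.cast_le (α := ℝ)).2 h1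
      refine h.trans_eq ?_
      push_cast
      refine Finset.sum_congr rfl fun n _ => ?_
      rw [Finset.sum_const, Finset.card_univ, Fintype.card_fin, nsmul_eq_mul]
      ring
    have hb2 : ∑ n ∈ G, (k : ℝ) * (((F n).card.choose (t n)) : ℝ) * (k : ℝ) ^ (S.card - t n)
        = (k:ℝ) ^ S.card * ∑ n ∈ G, (k : ℝ) * (((F n).card.choose (t n)) : ℝ) * (k⁻¹ : ℝ) ^ (t n)
        := by
      rw [Finset.mul_sum]
      refine Finset.sum_congr rfl fun n hn => ?_
      have htn : t n ≤ S.card := (htF n hn).trans (Finset.card_le_card (hFS n hn))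
      rw [pow_sub₀ _ hk0 htn, inv_pow]
      ring
    calc (Bad.card : ℝ) ≤ _ := h1'
      _ = _ := hb2
      _ < (k:ℝ) ^ S.card * 1 := mul_lt_mul_of_pos_left hsum (by positivity)
      _ = (k:ℝ) ^ S.card := mul_one _
  have hex : ∃ c₀ : α → Fin k, c₀ ∉ Bad := by
    by_contra h
    push_neg at h
    have h2 : Bad = Finset.univ := Finset.eq_univ_iff_forall.2 h
    rw [h2, Finset.card_univ, Fintype.card_fun, Fintype.card_fin, hcardα] at hcardBad
    rw [Nat.cast_pow] at hcardBad
    exact lt_irrefl _ hcardBad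
  obtain ⟨c₀, hc₀⟩ := hex
  set c : ℕ → Fin k := fun x => if h : x ∈ S then c₀ ⟨x, h⟩ else ⟨0, hk⟩ with hc
  refine ⟨c, fun n hn j => ?_⟩
  rw [hBad, Finset.mem_filter] at hc₀
  push_neg at hc₀
  have h3 := hc₀ (Finset.mem_univ _) n hn j
  have h4 : ((Finset.univ : Finset α).filter fun x => x.1 ∈ F n ∧ c₀ x = j)
      = ((Finset.univ : Finset α).filter fun x => x.1 ∈ F n ∧ c x.1 = j) := by
    refine Finset.filter_congr fun x _ => ?_
    have h5 : c x.1 = c₀ x := by rw [hc]; simp [dif_pos x.2]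
    rw [h5]
  rw [h4, card_filter_val (F n) (hFS n hn) (fun y => c y = j)] at h3
  exact h3

lemma geom_finset (Q : Finset ℕ) : ∑ i ∈ Q, ((2:ℝ)⁻¹) ^ i ≤ 2 := by
  classical
  have hQ : Q ⊆ Finset.range (Q.sup id + 1) := by
    intro i hi
    exact Finset.mem_range.2 (Nat.lt_succ_of_le (Finset.le_sup (f := id) hi))
  have h1 : ∑ i ∈ Q, ((2:ℝ)⁻¹) ^ i ≤ ∑ i ∈ Finset.range (Q.sup id + 1), ((2:ℝ)⁻¹) ^ i :=
    Finset.sum_le_sum_of_subset_of_nonneg hQ (fun i _ _ => by positivity)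
  refine h1.trans ?_
  rw [geom_sum_eq (by norm_num)]
  have h2 : ((2:ℝ)⁻¹) ^ (Q.sup id + 1) ≥ 0 := by positivity
  rw [div_le_iff_of_neg (by norm_num)]
  nlinarith

lemma geom_tail (M : ℕ) (P : Finset ℕ) (hP : ∀ m ∈ P, M ≤ m) :
    ∑ m ∈ P, ((2:ℝ)⁻¹) ^ m ≤ 2 * ((2:ℝ)⁻¹) ^ M := by
  classical
  have key : ∑ m ∈ P, ((2:ℝ)⁻¹) ^ m = ((2:ℝ)⁻¹) ^ M * ∑ i ∈ P.image (· - M), ((2:ℝ)⁻¹) ^ i := by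
    rw [Finset.mul_sum,
      Finset.sum_image (fun x hx y hy h => by have := hP x hx; have := hP y hy; omega)]
    refine Finset.sum_congr rfl fun m hm => ?_
    rw [← pow_add]
    congr 1
    have := hP m hm
    omega
  rw [key]
  have h1 := geom_finset (P.image (· - M))
  have h0 : (0:ℝ) ≤ ((2:ℝ)⁻¹) ^ M := by positivity
  nlinarith

lemma choose_le_two_pow' (m t : ℕ) : m.choose t ≤ 2 ^ m := by
  rcases le_or_gt t m with h | h
  · calc m.choose t ≤ ∑ i ∈ Finset.range (m+1), m.choose i :=
        Finset.single_le_sum (fun i _ => Nat.zero_le _) (Finset.mem_range.2 (Nat.lt_succ_of_le h))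
    _ = 2 ^ m := Nat.sum_range_choose m
  · rw [Nat.choose_eq_zero_of_lt h]; positivity

lemma pointwise_bound (lam ε : ℝ) (hlam : 0 < lam) (hε : 0 < ε) (k m : ℕ)
    (hk : (2:ℝ) ^ ((lam + 2)/ε) ≤ (k:ℝ)) :
    (2:ℝ) ^ (lam * m) * ((k:ℝ) * (m.choose (⌊ε * m⌋₊ + 1) : ℝ) * ((k:ℝ)⁻¹) ^ (⌊ε * m⌋₊ + 1))
      ≤ (k:ℝ) * ((2:ℝ)⁻¹) ^ m := by
  have h2 : (1:ℝ) ≤ (2:ℝ) ^ ((lam + 2)/ε) := by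
    rw [show (1:ℝ) = (2:ℝ) ^ (0:ℝ) by simp]
    exact Real.rpow_le_rpow_of_exponent_le (by norm_num) (by positivity)
  have hk1 : (1:ℝ) ≤ (k:ℝ) := h2.trans hk
  have hkpos : (0:ℝ) < k := lt_of_lt_of_le one_pos hk1
  set t := ⌊ε * m⌋₊ + 1 with ht
  have hkt : (2:ℝ) ^ ((lam + 2) * m) ≤ (k:ℝ) ^ t := by
    have h3 : ε * m ≤ (t:ℝ) := by
      have := Nat.lt_floor_add_one (ε * m)
      push_cast [ht]
      linarith
    have h4 : (k:ℝ) ^ (ε * m) ≤ (k:ℝ) ^ (t:ℝ) :=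
      Real.rpow_le_rpow_of_exponent_le hk1 h3
    have h5 : ((2:ℝ) ^ ((lam + 2)/ε)) ^ (ε * m) ≤ (k:ℝ) ^ (ε * m) :=
      Real.rpow_le_rpow (by positivity) hk (by positivity)
    have h6 : ((2:ℝ) ^ ((lam + 2)/ε)) ^ (ε * m) = (2:ℝ) ^ ((lam + 2) * m) := by
      rw [← Real.rpow_mul (by norm_num)]
      congr 1
      field_simp
    calc (2:ℝ) ^ ((lam + 2) * m) = _ := h6.symm
      _ ≤ (k:ℝ) ^ (ε * m) := h5
      _ ≤ (k:ℝ) ^ (t:ℝ) := h4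
      _ = (k:ℝ) ^ t := Real.rpow_natCast _ t
  have hchoose : ((m.choose t : ℕ) : ℝ) ≤ (2:ℝ) ^ (m:ℕ) := by
    exact_mod_cast Nat.cast_le.2 (choose_le_two_pow' m t)
  have hmain : (2:ℝ) ^ (lam * m) * ((k:ℝ) * (m.choose t : ℝ) * ((k:ℝ)⁻¹) ^ t)
      ≤ (2:ℝ) ^ (lam * m) * ((k:ℝ) * (2:ℝ) ^ (m:ℕ) * ((2:ℝ) ^ ((lam + 2) * m))⁻¹) := by
    have hpos1 : (0:ℝ) < (2:ℝ) ^ (lam * m) := Real.rpow_pos_of_pos (by norm_num) _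
    refine mul_le_mul_of_nonneg_left ?_ hpos1.le
    have hinv : ((k:ℝ)⁻¹) ^ t ≤ ((2:ℝ) ^ ((lam + 2) * m))⁻¹ := by
      rw [inv_pow]
      exact inv_anti₀ (Real.rpow_pos_of_pos (by norm_num) _) hkt
    have h1 : (k:ℝ) * (m.choose t : ℝ) ≤ (k:ℝ) * (2:ℝ) ^ (m:ℕ) :=
      mul_le_mul_of_nonneg_left hchoose hkpos.le
    exact mul_le_mul h1 hinv (by positivity) (by positivity)
  refine hmain.trans_eq ?_
  have hm1 : ((2:ℝ)⁻¹) ^ m = (2:ℝ) ^ (-(m:ℝ)) := by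
    rw [inv_pow, ← Real.rpow_natCast 2 m]
    exact (Real.rpow_neg (by norm_num) _).symm
  rw [hm1, show ((2:ℝ)) ^ (m:ℕ) = (2:ℝ) ^ ((m:ℕ):ℝ) from (Real.rpow_natCast 2 m).symm,
    ← Real.rpow_neg (by norm_num : (0:ℝ) ≤ 2)]
  rw [show (2:ℝ)^(lam*(m:ℝ)) * ((k:ℝ) * (2:ℝ)^((m:ℕ):ℝ) * (2:ℝ)^(-((lam+2)*(m:ℝ))))
      = (k:ℝ) * ((2:ℝ)^(lam*(m:ℝ)) * (2:ℝ)^((m:ℕ):ℝ) * (2:ℝ)^(-((lam+2)*(m:ℝ)))) from by ring]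
  rw [← Real.rpow_add (by norm_num), ← Real.rpow_add (by norm_num)]
  congr 1
  ring

lemma sum_bound (lam ε : ℝ) (hlam : 0 < lam) (hε : 0 < ε) (F : ℕ → Finset ℕ)
    (hcount : ∀ m : ℕ, {n : ℕ | (F n).card = m}.Finite ∧
      ({n : ℕ | (F n).card = m}.ncard : ℝ) ≤ 2 ^ (lam * m))
    (k : ℕ) (hk : (2:ℝ) ^ ((lam + 2)/ε) ≤ (k:ℝ)) (G : Finset ℕ)
    (hG : ∀ n ∈ G, k + 2 ≤ (F n).card) :
    ∑ n ∈ G, (k:ℝ) * (((F n).card.choose (⌊ε * (F n).card⌋₊ + 1)) : ℝ)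
        * ((k:ℝ)⁻¹) ^ (⌊ε * (F n).card⌋₊ + 1) ≤ 1/2 := by
  classical
  set g : ℕ → ℝ := fun m => (k:ℝ) * ((m.choose (⌊ε * m⌋₊ + 1)) : ℝ) * ((k:ℝ)⁻¹) ^ (⌊ε * m⌋₊ + 1)
    with hg
  have hgnonneg : ∀ m, 0 ≤ g m := fun m => by rw [hg]; positivity
  have hfib : ∑ n ∈ G, g ((F n).card)
      = ∑ m ∈ G.image (fun n => (F n).card), ∑ n ∈ G.filter (fun n => (F n).card = m),
          g ((F n).card) := by
    rw [Finset.sum_fiberwise_of_maps_to (fun n hn => Finset.mem_image_of_mem _ hn)]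
  have hinner : ∀ m ∈ G.image (fun n => (F n).card),
      ∑ n ∈ G.filter (fun n => (F n).card = m), g ((F n).card) ≤ (k:ℝ) * ((2:ℝ)⁻¹) ^ m := by
    intro m hm
    have h1 : ∑ n ∈ G.filter (fun n => (F n).card = m), g ((F n).card)
        = (G.filter (fun n => (F n).card = m)).card * g m := by
      rw [Finset.sum_congr rfl (fun n hn => by rw [(Finset.mem_filter.1 hn).2]),
        Finset.sum_const, nsmul_eq_mul]
    rw [h1]
    have h2 : ((G.filter (fun n => (F n).card = m)).card : ℝ)
        ≤ ({n : ℕ | (F n).card = m}.ncard : ℝ) := by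
      have hsub : ↑(G.filter (fun n => (F n).card = m)) ⊆ {n : ℕ | (F n).card = m} := by
        intro n hn
        exact (Finset.mem_filter.1 hn).2
      have h := Set.ncard_le_ncard hsub (hcount m).1
      rw [Set.ncard_coe_finset] at h
      exact_mod_cast h
    have h3 : ((G.filter (fun n => (F n).card = m)).card : ℝ) ≤ 2 ^ (lam * m) :=
      h2.trans (hcount m).2
    calc ((G.filter (fun n => (F n).card = m)).card : ℝ) * g m
        ≤ 2 ^ (lam * m) * g m := mul_le_mul_of_nonneg_right h3 (hgnonneg m)
      _ ≤ (k:ℝ) * ((2:ℝ)⁻¹) ^ m := pointwise_bound lam ε hlam hε k m hk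
  have hP : ∀ m ∈ G.image (fun n => (F n).card), k + 2 ≤ m := by
    intro m hm
    obtain ⟨n, hn, rfl⟩ := Finset.mem_image.1 hm
    exact hG n hn
  calc ∑ n ∈ G, g ((F n).card) = _ := hfib
    _ ≤ ∑ m ∈ G.image (fun n => (F n).card), (k:ℝ) * ((2:ℝ)⁻¹) ^ m :=
        Finset.sum_le_sum hinner
    _ = (k:ℝ) * ∑ m ∈ G.image (fun n => (F n).card), ((2:ℝ)⁻¹) ^ m := by
        rw [Finset.mul_sum]
    _ ≤ (k:ℝ) * (2 * ((2:ℝ)⁻¹) ^ (k + 2)) := by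
        refine mul_le_mul_of_nonneg_left ?_ (by positivity)
        exact geom_tail (k+2) _ hP
    _ ≤ 1/2 := by
        have hk2 : (k:ℝ) ≤ 2 ^ k := by
          exact_mod_cast Nat.cast_le.2 (Nat.lt_two_pow_self (n := k)).le
        rw [pow_succ, pow_succ, inv_pow]
        rw [div_eq_mul_inv]
        have h2k : (0:ℝ) < 2 ^ k := by positivity
        field_simp
        nlinarith

end Aux

/-- The submeasure associated with a sequence of finite sets:
`dF F A = limsup_n |A ∩ F n| / |F n|`. -/
noncomputable def dF (F : ℕ → Finset ℕ) (A : Set ℕ) : ℝ :=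
  Filter.limsup (fun n => ((A ∩ (F n : Set ℕ)).ncard : ℝ) / (F n).card) Filter.atTop

theorem stmt_2 (lam : ℝ) (hlam : 0 < lam) (F : ℕ → Finset ℕ)
    (hne : ∀ n, (F n).Nonempty)
    (hcount : ∀ m : ℕ, {n : ℕ | (F n).card = m}.Finite ∧
      ({n : ℕ | (F n).card = m}.ncard : ℝ) ≤ 2 ^ (lam * m)) :
    ∀ ε : ℝ, 0 < ε → ∃ (k : ℕ) (A : Fin k → Set ℕ),
      (⋃ i, A i) = Set.univ ∧ Pairwise (Function.onFun Disjoint A) ∧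
      ∀ i, dF F (A i) ≤ ε := by
  classical
  intro ε hε
  have hcob : ∀ A : Set ℕ, Filter.IsCoboundedUnder (· ≤ ·) Filter.atTop
      (fun n => ((A ∩ (F n : Set ℕ)).ncard : ℝ) / (F n).card) :=
    fun A => Filter.isCoboundedUnder_le_of_le Filter.atTop (x := 0)
      (fun n => by positivity)
  rcases le_or_gt 1 ε with hε1 | hε1
  · -- trivial case: one piece
    refine ⟨1, fun _ => Set.univ, by rw [Set.iUnion_const], ?_, ?_⟩
    · intro i j hij
      exact absurd (Subsingleton.elim i j) hij
    · intro i
      rw [dF]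
      refine Filter.limsup_le_of_le (hcob _) (Filter.Eventually.of_forall fun n => ?_)
      have hpos : (0:ℝ) < (F n).card := by
        exact_mod_cast Finset.card_pos.2 (hne n)
      rw [Set.univ_inter, Set.ncard_coe_finset, div_self hpos.ne']
      exact hε1
  -- main case : ε < 1
  set k : ℕ := ⌈(2:ℝ) ^ ((lam + 2)/ε)⌉₊ with hkdef
  have hk : (2:ℝ) ^ ((lam + 2)/ε) ≤ (k:ℝ) := Nat.le_ceil _
  have hk1R : (1:ℝ) ≤ (k:ℝ) := by
    refine le_trans ?_ hk
    rw [show (1:ℝ) = (2:ℝ) ^ (0:ℝ) by simp]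
    exact Real.rpow_le_rpow_of_exponent_le (by norm_num) (by positivity)
  have hk1 : 1 ≤ k := by exact_mod_cast hk1R
  set M : ℕ := k + 2 with hMdef
  -- find N such that all n ≥ N have |F n| ≥ M
  have hBfin : {n : ℕ | (F n).card < M}.Finite := by
    have hsub : {n : ℕ | (F n).card < M} ⊆ ⋃ m ∈ Finset.range M, {n : ℕ | (F n).card = m} := by
      intro n hn
      simp only [Set.mem_iUnion]
      exact ⟨(F n).card, Finset.mem_range.2 hn, rfl⟩
    exact Set.Finite.subset (Set.Finite.biUnion (Finset.range M).finite_toSet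
      (fun m _ => (hcount m).1)) hsub
  obtain ⟨b, hb⟩ := hBfin.bddAbove
  set N : ℕ := b + 1 with hNdef
  have hNM : ∀ n, N ≤ n → M ≤ (F n).card := by
    intro n hn
    by_contra h
    push_neg at h
    have := hb (show n ∈ {n : ℕ | (F n).card < M} from h)
    omega
  -- the "good" sets
  set t : ℕ → ℕ := fun m => ⌊ε * m⌋₊ + 1 with htdef
  set Good : ℕ → Set (ℕ → Fin k) :=
    fun n => {c | ∀ j : Fin k, ((F n).filter fun x => c x = j).card < t (F n).card} with hGood
  have hclosed : ∀ n, IsClosed (Good n) := by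
    intro n
    have hr : Continuous (fun (c : ℕ → Fin k) (x : {y // y ∈ F n}) => c x.1) :=
      continuous_pi fun x => continuous_apply x.1
    have heq : Good n = (fun (c : ℕ → Fin k) (x : {y // y ∈ F n}) => c x.1) ⁻¹'
        {g : {y // y ∈ F n} → Fin k | ∀ j : Fin k,
          ((Finset.univ : Finset {y // y ∈ F n}).filter
            fun x => x.1 ∈ F n ∧ g x = j).card < t (F n).card} := by
      ext c
      simp only [hGood, Set.mem_setOf_eq, Set.mem_preimage]
      constructor
      · intro h j
        rw [card_filter_val (S := F n) (F n) subset_rfl (fun y => c y = j)]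
        exact h j
      · intro h j
        have := h j
        rwa [card_filter_val (S := F n) (F n) subset_rfl (fun y => c y = j)] at this
    rw [heq]
    exact (isClosed_discrete _).preimage hr
  -- nonempty finite intersections
  have hCne : ∀ i : ℕ, (⋂ n ∈ Finset.Icc N (N + i), Good n).Nonempty := by
    intro i
    have htF : ∀ n ∈ Finset.Icc N (N + i), t (F n).card ≤ (F n).card := by
      intro n hn
      have hM : M ≤ (F n).card := hNM n (Finset.mem_Icc.1 hn).1
      have hm1 : 1 ≤ (F n).card := le_trans (by omega) hM
      have hfl : ⌊ε * (F n).card⌋₊ < (F n).card := by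
        rw [Nat.floor_lt (by positivity)]
        calc ε * (F n).card < 1 * (F n).card := by
              refine mul_lt_mul_of_pos_right hε1 ?_
              exact_mod_cast hm1
          _ = (F n).card := one_mul _
      have ht' : t (F n).card = ⌊ε * (F n).card⌋₊ + 1 := rfl
      omega
    have hsum : ∑ n ∈ Finset.Icc N (N + i),
        (k : ℝ) * ((F n).card.choose (t (F n).card) : ℝ) * ((k : ℝ)⁻¹) ^ (t (F n).card) < 1 := by
      have := sum_bound lam ε hlam hε F hcount k hk (Finset.Icc N (N + i))
        (fun n hn => hNM n (Finset.mem_Icc.1 hn).1)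
      calc _ ≤ (1:ℝ)/2 := this
        _ < 1 := by norm_num
    obtain ⟨c, hc⟩ := exists_good k hk1 F (fun n => t (F n).card) (Finset.Icc N (N + i)) htF hsum
    exact ⟨c, Set.mem_iInter₂.2 fun n hn => hc n hn⟩
  -- compactness
  set C : ℕ → Set (ℕ → Fin k) := fun i => ⋂ n ∈ Finset.Icc N (N + i), Good n with hC
  have hCclosed : ∀ i, IsClosed (C i) :=
    fun i => isClosed_biInter (fun n _ => hclosed n)
  have hCdec : ∀ i, C (i + 1) ⊆ C i := by
    intro i
    apply Set.biInter_subset_biInter_left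
    intro n hn
    have := Finset.mem_Icc.1 hn
    exact Finset.mem_Icc.2 ⟨this.1, by omega⟩
  have hmain := IsCompact.nonempty_iInter_of_sequence_nonempty_isCompact_isClosed
    C hCdec hCne ((hCclosed 0).isCompact) hCclosed
  obtain ⟨c, hc⟩ := hmain
  have hgood : ∀ n, N ≤ n → ∀ j : Fin k, ((F n).filter fun x => c x = j).card < t (F n).card := by
    intro n hn j
    have h1 : c ∈ C (n - N) := Set.mem_iInter.1 hc (n - N)
    have h2 : n ∈ Finset.Icc N (N + (n - N)) := Finset.mem_Icc.2 ⟨hn, by omega⟩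
    exact Set.mem_iInter₂.1 h1 n h2 j
  -- define the partition
  refine ⟨k, fun i => c ⁻¹' {i}, ?_, ?_, ?_⟩
  · ext x
    simp only [Set.mem_iUnion, Set.mem_preimage, Set.mem_singleton_iff, Set.mem_univ, iff_true]
    exact ⟨c x, rfl⟩
  · intro i j hij
    rw [Function.onFun, Set.disjoint_left]
    intro x hxi hxj
    exact hij (hxi.symm.trans hxj)
  · intro i
    rw [dF]
    refine Filter.limsup_le_of_le (hcob _) ?_
    rw [Filter.eventually_atTop]
    refine ⟨N, fun n hn => ?_⟩
    have hM : M ≤ (F n).card := hNM n hn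
    have hpos : (0:ℝ) < (F n).card := by
      have : 0 < (F n).card := by omega
      exact_mod_cast this
    have hset : (c ⁻¹' {i} ∩ (F n : Set ℕ)) = ↑((F n).filter fun x => c x = i) := by
      ext y
      simp only [Set.mem_inter_iff, Set.mem_preimage, Set.mem_singleton_iff, Finset.coe_filter,
        Set.mem_setOf_eq, Finset.mem_coe]
      tauto
    rw [hset, Set.ncard_coe_finset]
    rw [div_le_iff₀ hpos]
    have h1 : ((F n).filter fun x => c x = i).card ≤ ⌊ε * (F n).card⌋₊ := by
      have := hgood n hn i
      have ht' : t (F n).card = ⌊ε * (F n).card⌋₊ + 1 := rfl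
      omega
    calc (((F n).filter fun x => c x = i).card : ℝ) ≤ (⌊ε * (F n).card⌋₊ : ℝ) := by
          exact_mod_cast h1
      _ ≤ ε * (F n).card := Nat.floor_le (by positivity)
end

section
/- The set of nonatomic bounded sequences in ℓ¹ is closed in the sup-norm of ℓ∞(ℓ¹): if z = (z_n) is a bounded sequence in ℓ¹ such that for every ε > 0 there exists a bounded nonatomic sequence x = (x_n) in ℓ¹ with sup_n ‖z_n − x_n‖₁ ≤ ε, then z is nonatomic. -/
open Filter Set

noncomputable def dsub (x : ℕ → lp (fun _ : ℕ => ℝ) 1) (A : Set ℕ) : ℝ :=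
  Filter.limsup (fun n => ∑' j : A, |x n j|) Filter.atTop

def IsBddSeq (x : ℕ → lp (fun _ : ℕ => ℝ) 1) : Prop := ∃ C : ℝ, ∀ n, ‖x n‖ ≤ C

/-- `x` is nonatomic: for every `ε > 0` there is a finite partition of `ℕ`
all of whose pieces have `dsub x`-value at most `ε`. -/
def Nonatomic (x : ℕ → lp (fun _ : ℕ => ℝ) 1) : Prop :=
  ∀ ε : ℝ, 0 < ε → ∃ (m : ℕ) (A : Fin m → Set ℕ),
    (⋃ i, A i) = Set.univ ∧ Pairwise (Function.onFun Disjoint A) ∧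
    ∀ i, dsub x (A i) ≤ ε

lemma summable_abs_lp (f : lp (fun _ : ℕ => ℝ) 1) : Summable (fun j => |f j|) := by
  have := (lp.memℓp f).summable (p := 1) (by norm_num)
  simpa [Real.norm_eq_abs] using this

lemma norm_eq_tsum_abs (f : lp (fun _ : ℕ => ℝ) 1) : ‖f‖ = ∑' j, |f j| := by
  have := lp.norm_eq_tsum_rpow (p := 1) (by norm_num) f
  simpa [Real.norm_eq_abs] using this

lemma tsum_abs_sub_le (f : lp (fun _ : ℕ => ℝ) 1) (A : Set ℕ) :
    ∑' j : A, |f j| ≤ ‖f‖ := by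
  rw [norm_eq_tsum_abs]
  exact Summable.tsum_subtype_le (fun j => |f j|) A (fun _ => abs_nonneg _) (summable_abs_lp f)

theorem stmt_5 (z : ℕ → lp (fun _ : ℕ => ℝ) 1) (hz : IsBddSeq z)
    (h : ∀ ε : ℝ, 0 < ε → ∃ x : ℕ → lp (fun _ : ℕ => ℝ) 1,
      IsBddSeq x ∧ Nonatomic x ∧ ∀ n, ‖z n - x n‖ ≤ ε) :
    Nonatomic z := by
  intro ε hε
  obtain ⟨x, ⟨Cx, hCx⟩, hna, hclose⟩ := h (ε / 2) (by linarith)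
  obtain ⟨m, A, hcov, hdisj, hsmall⟩ := hna (ε / 2) (by linarith)
  refine ⟨m, A, hcov, hdisj, fun i => ?_⟩
  -- pointwise bound
  have key : ∀ n, (∑' j : A i, |z n j|) ≤ (∑' j : A i, |x n j|) + ε / 2 := by
    intro n
    have hsz : Summable (fun j : A i => |z n j|) :=
      (summable_abs_lp (z n)).subtype (A i)
    have hsx : Summable (fun j : A i => |x n j|) :=
      (summable_abs_lp (x n)).subtype (A i)
    have hsd : Summable (fun j : A i => |(z n - x n) j|) :=
      (summable_abs_lp (z n - x n)).subtype (A i)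
    have h1 : (∑' j : A i, |z n j|) ≤ ∑' j : A i, (|x n j| + |(z n - x n) j|) := by
      refine Summable.tsum_le_tsum (fun j => ?_) hsz (hsx.add hsd)
      have : (z n : ℕ → ℝ) j = x n j + (z n - x n) j := by
        simp [lp.coeFn_sub]
      rw [this]
      exact abs_add_le _ _
    rw [Summable.tsum_add hsx hsd] at h1
    have h2 : (∑' j : A i, |(z n - x n) j|) ≤ ε / 2 :=
      le_trans (tsum_abs_sub_le (z n - x n) (A i)) (hclose n)
    linarith
  -- limsup bound
  have hbddx : IsBoundedUnder (· ≤ ·) atTop (fun n => ∑' j : A i, |x n j|) :=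
    isBoundedUnder_of ⟨Cx, fun n => le_trans (tsum_abs_sub_le (x n) (A i)) (hCx n)⟩
  have hcobx : IsCoboundedUnder (· ≤ ·) atTop (fun n => ∑' j : A i, |x n j|) := by
    refine IsBoundedUnder.isCoboundedUnder_le (isBoundedUnder_of ⟨0, fun n => ?_⟩)
    exact tsum_nonneg fun j => abs_nonneg _
  have hcobz : IsCoboundedUnder (· ≤ ·) atTop (fun n => ∑' j : A i, |z n j|) := by
    refine IsBoundedUnder.isCoboundedUnder_le (isBoundedUnder_of ⟨0, fun n => ?_⟩)
    exact tsum_nonneg fun j => abs_nonneg _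
  have hbddsum : IsBoundedUnder (· ≤ ·) atTop
      (fun n => (∑' j : A i, |x n j|) + ε / 2) := by
    refine isBoundedUnder_of ⟨Cx + ε / 2, fun n => ?_⟩
    have := le_trans (tsum_abs_sub_le (x n) (A i)) (hCx n)
    linarith
  have hls : dsub z (A i) ≤ Filter.limsup (fun n => (∑' j : A i, |x n j|) + ε / 2) atTop :=
    limsup_le_limsup (Eventually.of_forall key) hcobz hbddsum
  rw [limsup_add_const atTop _ (ε / 2) hbddx hcobx] at hls
  have := hsmall i
  unfold dsub at *
  linarith
end

section
/- Every bounded nonatomic sequence x = (x_n) in ℓ¹ converges to zero uniformly on ℕ; that is, ‖x_n‖_∞ = sup_j |x_n(j)| → 0 as n → ∞. -/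
open Filter Set

theorem stmt_11 (x : ℕ → lp (fun _ : ℕ => ℝ) 1) (hx : IsBddSeq x)
    (hnx : Nonatomic x) :
    Filter.Tendsto (fun n => ⨆ j : ℕ, |x n j|) Filter.atTop (nhds 0) := by
  obtain ⟨C, hC⟩ := hx
  have hsum : ∀ n, Summable fun j => |x n j| := by
    intro n
    have h := lp.memℓp (x n)
    have h2 := (memℓp_gen_iff (p := 1) (by norm_num)).1 h
    simpa using h2
  have htsub : ∀ (n) (A : Set ℕ), (∑' j : A, |x n j|) ≤ C := by
    intro n A
    have h1 : (∑' j : A, |x n j|) ≤ ∑' j, |x n j| :=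
      Summable.tsum_le_tsum_of_inj (Subtype.val) Subtype.val_injective
        (fun j _ => abs_nonneg _) (fun j => le_refl _)
        ((hsum n).subtype A) (hsum n)
    have h2 : ∑' j, |x n j| = ‖x n‖ := by
      rw [lp.norm_eq_tsum_rpow (by norm_num) (x n)]
      simp [Real.norm_eq_abs]
    exact h1.trans (h2 ▸ hC n)
  rw [Metric.tendsto_atTop]
  intro ε hε
  obtain ⟨m, A, hUnion, -, hd⟩ := hnx (ε / 4) (by linarith)
  have hev : ∀ᶠ n in atTop, ∀ i, (∑' j : A i, |x n j|) < ε / 2 := by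
    rw [eventually_all]
    intro i
    refine eventually_lt_of_limsup_lt (lt_of_le_of_lt (hd i) (by linarith)) ?_
    exact Filter.isBoundedUnder_of ⟨C, fun n => htsub n (A i)⟩
  obtain ⟨N, hN⟩ := hev.exists_forall_of_atTop
  refine ⟨N, fun n hn => ?_⟩
  have hsup : (⨆ j : ℕ, |x n j|) ≤ ε / 2 := by
    refine ciSup_le fun j => ?_
    have hj : j ∈ ⋃ i, A i := hUnion ▸ Set.mem_univ j
    obtain ⟨i, hi⟩ := Set.mem_iUnion.1 hj
    have hle : |x n j| ≤ ∑' k : A i, |x n k| :=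
      Summable.le_tsum ((hsum n).subtype (A i)) ⟨j, hi⟩ fun _ _ => abs_nonneg _
    exact hle.trans (hN n hn i).le
  have hnonneg : 0 ≤ ⨆ j : ℕ, |x n j| := Real.iSup_nonneg fun j => abs_nonneg _
  rw [Real.dist_eq, sub_zero, abs_of_nonneg hnonneg]
  linarith
end

section
/- Let T : ℓ¹ → ℓ¹ be a continuous linear operator, let z_n = T(e_n) where (e_n) is the standard unit vector basis of ℓ¹, and let x = (x_n) be a bounded sequence in ℓ¹ with r = sup_n ‖x_n‖₁ that converges to zero pointwise on ℕ (i.e., x_n(j) → 0 as n → ∞ for each j). Let y_n = T(x_n). Then for every subset A ⊆ ℕ, limsup_{n→∞} ‖1_A · y_n‖_∞ ≤ r · limsup_{n→∞} ‖1_A · z_n‖_∞, where ‖u‖_∞ = sup_k |u(k)|. -/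
open Filter Set

/-- The sup-norm of `u` restricted to the set `A`: `‖1_A · u‖_∞`. -/
noncomputable def supNormOn (A : Set ℕ) (u : lp (fun _ : ℕ => ℝ) 1) : ℝ :=
  ⨆ k : ℕ, A.indicator (fun k => |u k|) k

lemma abs_apply_le_norm (u : lp (fun _ : ℕ => ℝ) 1) (k : ℕ) : |u k| ≤ ‖u‖ := by
  simpa using lp.norm_apply_le_norm one_ne_zero u k

lemma supNormOn_nonneg (A : Set ℕ) (u : lp (fun _ : ℕ => ℝ) 1) : 0 ≤ supNormOn A u :=
  Real.iSup_nonneg fun k => Set.indicator_nonneg (fun _ _ => abs_nonneg _) k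

lemma supNormOn_le_norm (A : Set ℕ) (u : lp (fun _ : ℕ => ℝ) 1) : supNormOn A u ≤ ‖u‖ := by
  refine ciSup_le fun k => ?_
  by_cases hk : k ∈ A
  · rw [Set.indicator_of_mem hk]; exact abs_apply_le_norm u k
  · rw [Set.indicator_of_notMem hk]; exact norm_nonneg u

lemma abs_le_supNormOn (A : Set ℕ) (u : lp (fun _ : ℕ => ℝ) 1) {k : ℕ} (hk : k ∈ A) :
    |u k| ≤ supNormOn A u := by
  have hb : BddAbove (Set.range fun k => A.indicator (fun k => |u k|) k) := by
    refine ⟨‖u‖, ?_⟩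
    rintro _ ⟨k, rfl⟩
    dsimp only
    by_cases h : k ∈ A
    · rw [Set.indicator_of_mem h]; exact abs_apply_le_norm u k
    · rw [Set.indicator_of_notMem h]; exact norm_nonneg u
  have := le_ciSup hb k
  rwa [Set.indicator_of_mem hk] at this

lemma lp_hasSum_abs (u : lp (fun _ : ℕ => ℝ) 1) : HasSum (fun j => |u j|) ‖u‖ := by
  have := lp.hasSum_norm (p := 1) (by norm_num) u
  simpa using this

lemma lp_summable_abs (u : lp (fun _ : ℕ => ℝ) 1) : Summable (fun j => |u j|) :=
  (lp_hasSum_abs u).summable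

set_option maxHeartbeats 1000000 in
theorem stmt_12 (T : lp (fun _ : ℕ => ℝ) 1 →L[ℝ] lp (fun _ : ℕ => ℝ) 1)
    (x : ℕ → lp (fun _ : ℕ => ℝ) 1) (r : ℝ)
    (hbdd : BddAbove (Set.range fun n => ‖x n‖))
    (hr : r = ⨆ n, ‖x n‖)
    (hp : ∀ j : ℕ, Filter.Tendsto (fun n => x n j) Filter.atTop (nhds 0))
    (A : Set ℕ) :
    Filter.limsup (fun n => supNormOn A (T (x n))) Filter.atTop ≤
      r * Filter.limsup (fun n => supNormOn A (T (lp.single 1 n 1))) Filter.atTop := by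
  set z : ℕ → lp (fun _ : ℕ => ℝ) 1 := fun n => T (lp.single 1 n 1) with hz
  set L : ℝ := Filter.limsup (fun n => supNormOn A (z n)) Filter.atTop with hL
  have hzn : ∀ j, ‖z j‖ ≤ ‖T‖ := by
    intro j
    have h1 : ‖lp.single (E := fun _ : ℕ => ℝ) 1 j (1 : ℝ)‖ = 1 := by
      have := lp.norm_single (E := fun _ : ℕ => ℝ) (p := 1) (by norm_num)
        j (1 : ℝ)
      simpa using this
    calc ‖z j‖ ≤ ‖T‖ * ‖lp.single (E := fun _ : ℕ => ℝ) 1 j (1 : ℝ)‖ := T.le_opNorm _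
      _ = ‖T‖ := by rw [h1, mul_one]
  have hr0 : 0 ≤ r := by
    rw [hr]
    exact Real.iSup_nonneg fun n => norm_nonneg _
  have hxr : ∀ n, ‖x n‖ ≤ r := fun n => hr ▸ le_ciSup hbdd n
  -- boundedness facts
  have hzbd : IsBoundedUnder (· ≤ ·) atTop (fun n => supNormOn A (z n)) :=
    isBoundedUnder_of ⟨‖T‖, fun n => (supNormOn_le_norm A (z n)).trans (hzn n)⟩
  have hfbd : IsBoundedUnder (· ≤ ·) atTop (fun n => supNormOn A (T (x n))) := by
    refine isBoundedUnder_of ⟨‖T‖ * r, fun n => ?_⟩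
    calc supNormOn A (T (x n)) ≤ ‖T (x n)‖ := supNormOn_le_norm A _
      _ ≤ ‖T‖ * ‖x n‖ := T.le_opNorm _
      _ ≤ ‖T‖ * r := by
          exact mul_le_mul_of_nonneg_left (hxr n) (norm_nonneg T)
  have hfcb : IsCoboundedUnder (· ≤ ·) atTop (fun n => supNormOn A (T (x n))) :=
    (isBoundedUnder_of ⟨0, fun n => supNormOn_nonneg A _⟩ :
      IsBoundedUnder (· ≥ ·) atTop _).isCoboundedUnder_le
  have hL0 : 0 ≤ L :=
    le_limsup_of_frequently_le (Frequently.of_forall fun n => supNormOn_nonneg A _) hzbd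
  -- main estimate: for every ε > 0
  refine le_of_forall_pos_le_add fun ε hε => ?_
  set δ : ℝ := ε / (r + 1) with hδ
  have hδ0 : 0 < δ := div_pos hε (by linarith)
  obtain ⟨N, hN⟩ : ∃ N, ∀ n ≥ N, supNormOn A (z n) < L + δ := by
    have := eventually_lt_of_limsup_lt (by linarith : L < L + δ) hzbd
    exact eventually_atTop.1 this
  set b : ℕ → ℝ := fun j => if j < N then ‖z j‖ else L + δ with hb
  have hb0 : ∀ j, 0 ≤ b j := by
    intro j; rw [hb]; dsimp only
    split
    · exact norm_nonneg _
    · linarith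
  have hbB : ∀ j, b j ≤ max ‖T‖ (L + δ) := by
    intro j; rw [hb]; dsimp only
    split
    · exact le_max_of_le_left (hzn j)
    · exact le_max_right _ _
  set g : ℕ → ℝ := fun n => ∑ j ∈ Finset.range N, |x n j| * ‖z j‖ with hg
  have hgten : Tendsto g atTop (nhds 0) := by
    have : Tendsto (fun n => ∑ j ∈ Finset.range N, |x n j| * ‖z j‖) atTop
        (nhds (∑ j ∈ Finset.range N, (0 : ℝ))) := by
      refine tendsto_finset_sum _ fun j _ => ?_
      have := ((hp j).abs).mul_const ‖z j‖
      simpa using this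
    simpa using this
  -- pointwise estimate
  have key : ∀ n, n ≥ 0 → supNormOn A (T (x n)) ≤ g n + r * (L + δ) := by
    intro n _
    have hrc : 0 ≤ r * (L + δ) := mul_nonneg hr0 (by linarith)
    have hg0 : 0 ≤ g n :=
      Finset.sum_nonneg fun j _ => mul_nonneg (abs_nonneg _) (norm_nonneg _)
    refine ciSup_le fun k => ?_
    by_cases hk : k ∈ A
    swap
    · rw [Set.indicator_of_notMem hk]; linarith
    rw [Set.indicator_of_mem hk]
    -- HasSum decomposition
    have hsum : HasSum (fun j => x n j * z j k) ((T (x n)) k) := by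
      have h1 : HasSum (fun j : ℕ => lp.single 1 j (x n j)) (x n) :=
        lp.hasSum_single (by norm_num) (x n)
      have h2 : HasSum (fun j : ℕ => T (lp.single 1 j (x n j))) (T (x n)) :=
        T.hasSum h1
      have h3 : ∀ j, T (lp.single 1 j (x n j)) = x n j • z j := by
        intro j
        have : lp.single (E := fun _ : ℕ => ℝ) 1 j (x n j) =
            x n j • lp.single 1 j (1 : ℝ) := by
          rw [← lp.single_smul]
          norm_num
        rw [this, map_smul]
      rw [funext h3] at h2
      -- evaluate at k via continuity of evaluation
      have heval : HasSum (fun j => (x n j • z j) k) ((T (x n)) k) := by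
        let E : lp (fun _ : ℕ => ℝ) 1 →L[ℝ] ℝ :=
          LinearMap.mkContinuous
            { toFun := fun u => u k
              map_add' := fun u v => by simp [lp.coeFn_add]
              map_smul' := fun c u => by simp [lp.coeFn_smul] }
            1 (fun u => by rw [one_mul]; exact abs_apply_le_norm u k)
        have := E.hasSum h2
        exact this
      have he : ∀ j, (x n j • z j) k = x n j * z j k := fun j => by
        simp [lp.coeFn_smul]
      rwa [funext he] at heval
    have hxs : Summable fun j => |x n j| := lp_summable_abs (x n)
    have hsumm : Summable fun j => |x n j| * b j := by
      refine Summable.of_nonneg_of_le (fun j => mul_nonneg (abs_nonneg _) (hb0 j))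
        (fun j => mul_le_mul_of_nonneg_left (hbB j) (abs_nonneg _))
        (hxs.mul_right _)
    have habs : Summable fun j => |x n j * z j k| := by
      refine Summable.of_nonneg_of_le (fun j => abs_nonneg _) (fun j => ?_)
        (hxs.mul_right ‖T‖)
      rw [abs_mul]
      exact mul_le_mul_of_nonneg_left ((abs_apply_le_norm (z j) k).trans (hzn j))
        (abs_nonneg _)
    have hzk : ∀ j, |z j k| ≤ b j := by
      intro j
      rw [hb]; dsimp only
      split_ifs with hj
      · exact abs_apply_le_norm (z j) k
      · exact (abs_le_supNormOn A (z j) hk).trans (hN j (not_lt.1 hj)).le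
    have step1 : |(T (x n)) k| ≤ ∑' j, |x n j * z j k| := by
      rw [← hsum.tsum_eq]
      have habs' : Summable fun j => ‖x n j * z j k‖ := by
        simpa only [Real.norm_eq_abs] using habs
      have := norm_tsum_le_tsum_norm habs'
      simpa only [Real.norm_eq_abs] using this
    have step2 : ∑' j, |x n j * z j k| ≤ ∑' j, |x n j| * b j := by
      refine Summable.tsum_le_tsum (fun j => ?_) habs hsumm
      rw [abs_mul]
      exact mul_le_mul_of_nonneg_left (hzk j) (abs_nonneg _)
    have step3 : ∑' j, |x n j| * b j ≤ g n + r * (L + δ) := by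
      set S : Set ℕ := (↑(Finset.range N) : Set ℕ)ᶜ with hS
      have hsplit := Summable.sum_add_tsum_compl (s := Finset.range N) hsumm
      rw [← hsplit]
      have e1 : ∑ j ∈ Finset.range N, |x n j| * b j = g n := by
        refine Finset.sum_congr rfl fun j hj => ?_
        rw [hb]; dsimp only
        rw [if_pos (Finset.mem_range.1 hj)]
      have e2 : ∑' (j : S), |x n (j : ℕ)| * b j
          ≤ r * (L + δ) := by
        have hbe : ∀ j : S,
            |x n (j : ℕ)| * b j = |x n (j : ℕ)| * (L + δ) := by
          rintro ⟨j, hj⟩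
          simp only [hS, Set.mem_compl_iff, Finset.coe_range, Set.mem_Iio, not_lt] at hj
          congr 1
          rw [hb]; dsimp only
          rw [if_neg (not_lt.2 hj)]
        calc ∑' (j : S), |x n (j : ℕ)| * b j
            = ∑' (j : S), |x n (j : ℕ)| * (L + δ) :=
              tsum_congr hbe
          _ = (∑' (j : S), |x n (j : ℕ)|) * (L + δ) :=
              tsum_mul_right
          _ ≤ ‖x n‖ * (L + δ) := by
              refine mul_le_mul_of_nonneg_right ?_ (by linarith)
              rw [← (lp_hasSum_abs (x n)).tsum_eq]
              exact Summable.tsum_subtype_le (fun j => |x n j|) _ (fun j => abs_nonneg _) hxs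
          _ ≤ r * (L + δ) := mul_le_mul_of_nonneg_right (hxr n) (by linarith)
      linarith [e1, e2]
    calc |(T (x n)) k| ≤ ∑' j, |x n j * z j k| := step1
      _ ≤ ∑' j, |x n j| * b j := step2
      _ ≤ g n + r * (L + δ) := step3
  -- take limsup
  have hlim : Filter.limsup (fun n => supNormOn A (T (x n))) atTop ≤ r * (L + δ) := by
    have h1 : Filter.limsup (fun n => supNormOn A (T (x n))) atTop ≤
        Filter.limsup (fun n => g n + r * (L + δ)) atTop := by
      refine limsup_le_limsup (eventually_atTop.2 ⟨0, key⟩) hfcb ?_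
      exact (hgten.add_const _).isBoundedUnder_le
    have h2 : Filter.limsup (fun n => g n + r * (L + δ)) atTop = r * (L + δ) := by
      have : Tendsto (fun n => g n + r * (L + δ)) atTop (nhds (0 + r * (L + δ))) :=
        hgten.add_const _
      rw [zero_add] at this
      exact this.limsup_eq
    rw [h2] at h1
    exact h1
  have : r * (L + δ) ≤ r * L + ε := by
    have : r * δ ≤ ε := by
      rw [hδ]
      rw [div_eq_mul_inv, ← mul_assoc]
      have h1 : r * ε ≤ (r + 1) * ε := by nlinarith
      calc r * ε * (r + 1)⁻¹ ≤ (r + 1) * ε * (r + 1)⁻¹ := by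
            exact mul_le_mul_of_nonneg_right h1 (by positivity)
        _ = ε := by field_simp
    nlinarith
  linarith
end

section
/- Let T : ℓ¹ → ℓ¹ be a continuous linear operator, let z_n = T(e_n) where (e_n) is the standard unit vector basis of ℓ¹, assume z = (z_n) is bounded, and let x = (x_n) be a bounded sequence in ℓ¹ with r = sup_n ‖x_n‖₁ that converges to zero pointwise on ℕ (i.e., x_n(j) → 0 as n → ∞ for each j). Let y_n = T(x_n). Then for every subset A ⊆ ℕ, d_y(A) ≤ r · d_z(A). -/
open Filter Set

noncomputable abbrev L1' := lp (fun _ : ℕ => ℝ) 1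

lemma hasSum_abs' (f : L1') : HasSum (fun j => |f j|) ‖f‖ := by
  have h := lp.hasSum_norm (p := 1) (by norm_num) f
  simpa [Real.norm_eq_abs] using h

lemma summable_abs'' (f : L1') : Summable (fun j => |f j|) := (hasSum_abs' f).summable

lemma summable_abs_sub' (A : Set ℕ) (f : L1') : Summable (fun j : A => |f j|) :=
  (summable_abs'' f).subtype A

noncomputable def phiA (A : Set ℕ) (f : L1') : ℝ := ∑' j : A, |f j|

lemma phiA_nonneg (A : Set ℕ) (f : L1') : 0 ≤ phiA A f :=
  tsum_nonneg fun _ => abs_nonneg _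

lemma phiA_le_norm (A : Set ℕ) (f : L1') : phiA A f ≤ ‖f‖ := by
  rw [← (hasSum_abs' f).tsum_eq]
  exact Summable.tsum_le_tsum_of_inj (Subtype.val) Subtype.val_injective
    (fun _ _ => abs_nonneg _) (fun j => le_refl _)
    (summable_abs_sub' A f) (summable_abs'' f)

lemma phiA_add (A : Set ℕ) (f g : L1') : phiA A (f + g) ≤ phiA A f + phiA A g := by
  calc phiA A (f + g) ≤ ∑' j : A, (|f j| + |g j|) := by
        refine Summable.tsum_le_tsum (fun j => ?_) (summable_abs_sub' A (f+g))
          ((summable_abs_sub' A f).add (summable_abs_sub' A g))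
        simp only [lp.coeFn_add, Pi.add_apply]
        exact abs_add_le _ _
    _ = phiA A f + phiA A g := Summable.tsum_add (summable_abs_sub' A f) (summable_abs_sub' A g)

lemma phiA_zero (A : Set ℕ) : phiA A 0 = 0 := by
  simp [phiA, lp.coeFn_zero]

lemma phiA_smul (A : Set ℕ) (c : ℝ) (f : L1') : phiA A (c • f) = |c| * phiA A f := by
  rw [phiA, phiA, ← tsum_mul_left]
  congr 1
  ext j
  simp [lp.coeFn_smul, abs_mul]

lemma phiA_finsum (A : Set ℕ) {ι : Type*} (s : Finset ι) (g : ι → L1') :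
    phiA A (∑ i ∈ s, g i) ≤ ∑ i ∈ s, phiA A (g i) :=
  Finset.le_sum_of_subadditive (phiA A) (phiA_zero A).le (phiA_add A) s g

lemma phiA_continuous (A : Set ℕ) : Continuous (phiA A) := by
  have hlip : LipschitzWith 1 (phiA A) := by
    refine LipschitzWith.of_dist_le_mul fun a b => ?_
    rw [Real.dist_eq]
    simp only [NNReal.coe_one, one_mul, dist_eq_norm]
    have h1 : phiA A a - phiA A b ≤ ‖a - b‖ := by
      have := phiA_add A b (a - b)
      simp only [add_sub_cancel] at this
      linarith [phiA_le_norm A (a - b)]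
    have h2 : phiA A b - phiA A a ≤ ‖a - b‖ := by
      have := phiA_add A a (b - a)
      simp only [add_sub_cancel] at this
      have := phiA_le_norm A (b - a)
      rw [norm_sub_rev] at this
      linarith
    exact abs_sub_le_iff.mpr ⟨h1, h2⟩
  exact hlip.continuous

lemma phiA_hasSum_le (A : Set ℕ) {g : ℕ → L1'} {f : L1'} (hg : HasSum g f)
    {u : ℕ → ℝ} (hu : Summable u) (hnn : ∀ k, 0 ≤ u k) (hle : ∀ k, phiA A (g k) ≤ u k) :
    phiA A f ≤ ∑' k, u k := by
  have ht : Tendsto (fun s : Finset ℕ => phiA A (∑ i ∈ s, g i)) atTop (nhds (phiA A f)) :=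
    ((phiA_continuous A).continuousAt.tendsto).comp hg
  refine le_of_tendsto ht (Eventually.of_forall fun s => ?_)
  calc phiA A (∑ i ∈ s, g i) ≤ ∑ i ∈ s, phiA A (g i) := phiA_finsum A s g
    _ ≤ ∑ i ∈ s, u i := Finset.sum_le_sum fun i _ => hle i
    _ ≤ ∑' k, u k := Summable.sum_le_tsum s (fun i _ => hnn i) hu

set_option maxHeartbeats 2000000 in
theorem stmt_14 (T : lp (fun _ : ℕ => ℝ) 1 →L[ℝ] lp (fun _ : ℕ => ℝ) 1)
    (hz : IsBddSeq (fun n => T (lp.single 1 n 1)))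
    (x : ℕ → lp (fun _ : ℕ => ℝ) 1) (r : ℝ)
    (hbdd : BddAbove (Set.range fun n => ‖x n‖))
    (hr : r = ⨆ n, ‖x n‖)
    (hp : ∀ j : ℕ, Filter.Tendsto (fun n => x n j) Filter.atTop (nhds 0))
    (A : Set ℕ) :
    dsub (fun n => T (x n)) A ≤ r * dsub (fun n => T (lp.single 1 n 1)) A := by
  haveI : Fact ((1:ENNReal) ≤ 1) := ⟨le_refl _⟩
  set z : ℕ → L1' := fun k => T (lp.single 1 k 1) with hzdef
  obtain ⟨C₀, hC₀⟩ := hz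
  set C : ℝ := max C₀ 0 with hCdef
  have hC : ∀ k, phiA A (z k) ≤ C := fun k =>
    (phiA_le_norm A (z k)).trans ((hC₀ k).trans (le_max_left _ _))
  have hCnn : 0 ≤ C := le_max_right _ _
  have hgoal1 : dsub (fun n => T (x n)) A =
      Filter.limsup (fun n => phiA A (T (x n))) Filter.atTop := rfl
  have hgoal2 : dsub (fun n => T (lp.single 1 n 1)) A =
      Filter.limsup (fun k => phiA A (z k)) Filter.atTop := rfl
  rw [hgoal1, hgoal2]
  set D : ℝ := Filter.limsup (fun k => phiA A (z k)) Filter.atTop with hDdef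
  have hbz : IsBoundedUnder (· ≤ ·) atTop (fun k => phiA A (z k)) :=
    isBoundedUnder_of ⟨C, fun k => hC k⟩
  have hrnn : 0 ≤ r := by
    rw [hr]
    exact (norm_nonneg (x 0)).trans (le_ciSup hbdd 0)
  have hxr : ∀ n, ‖x n‖ ≤ r := fun n => hr ▸ le_ciSup hbdd n
  have hDnn : 0 ≤ D :=
    le_limsup_of_frequently_le (Frequently.of_forall fun k => phiA_nonneg A (z k)) hbz
  have hsum : ∀ n, HasSum (fun k => x n k • z k) (T (x n)) := by
    intro n
    have h1 : HasSum (fun k => lp.single 1 k (x n k : ℝ)) (x n) :=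
      lp.hasSum_single (by norm_num) (x n)
    have h2 := h1.mapL T
    have h3 : ∀ k, T (lp.single 1 k ((x n) k)) = (x n) k • z k := by
      intro k
      have h5 := lp.single_smul (E := fun _ : ℕ => ℝ) (1 : ENNReal) k ((x n) k) (1:ℝ)
      have h4 : lp.single (E := fun _ : ℕ => ℝ) 1 k ((x n) k)
          = (x n) k • lp.single 1 k (1:ℝ) := by
        simpa using h5
      rw [h4, map_smul]
    simpa only [h3] using h2
  have hu_summable : ∀ n, Summable (fun k => |x n k| * phiA A (z k)) := fun n =>
    Summable.of_nonneg_of_le (fun k => mul_nonneg (abs_nonneg _) (phiA_nonneg A (z k)))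
      (fun k => mul_le_mul_of_nonneg_left (hC k) (abs_nonneg _))
      ((summable_abs'' (x n)).mul_right C)
  have hkey : ∀ n, phiA A (T (x n)) ≤ ∑' k, |x n k| * phiA A (z k) := by
    intro n
    refine phiA_hasSum_le A (hsum n) (hu_summable n)
      (fun k => mul_nonneg (abs_nonneg _) (phiA_nonneg A (z k))) (fun k => ?_)
    rw [phiA_smul]
  have main : ∀ ε : ℝ, 0 < ε →
      Filter.limsup (fun n => phiA A (T (x n))) Filter.atTop ≤ r * D + ε := by
    intro ε hε
    set ε' : ℝ := ε / (r + 1) with hε'def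
    have hε' : 0 < ε' := div_pos hε (by linarith)
    have hev : ∀ᶠ k in atTop, phiA A (z k) < D + ε' :=
      eventually_lt_of_limsup_lt (by linarith) hbz
    obtain ⟨N, hN⟩ := eventually_atTop.mp hev
    have hbound : ∀ n, phiA A (T (x n)) ≤
        (∑ i ∈ Finset.range N, |x n i| * C) + r * (D + ε') := by
      intro n
      refine (hkey n).trans ?_
      have hu := hu_summable n
      rw [← Summable.sum_add_tsum_nat_add N hu]
      have htail : ∑' k, |x n (k + N)| * phiA A (z (k + N)) ≤ r * (D + ε') := by
        have h1 : ∑' k, |x n (k + N)| * phiA A (z (k + N)) ≤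
            ∑' k, |x n (k + N)| * (D + ε') := by
          refine Summable.tsum_le_tsum (fun k => mul_le_mul_of_nonneg_left
              (le_of_lt (hN (k + N) (Nat.le_add_left N k))) (abs_nonneg _))
            ((summable_nat_add_iff N).mpr hu)
            ((summable_nat_add_iff N).mpr ((summable_abs'' (x n)).mul_right (D + ε')))
        have h2 : ∑' k, |x n (k + N)| * (D + ε') = (∑' k, |x n (k + N)|) * (D + ε') :=
          tsum_mul_right
        have h3 : (∑' k, |x n (k + N)|) ≤ ‖x n‖ := by
          have h4 := Summable.sum_add_tsum_nat_add N (summable_abs'' (x n))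
          rw [(hasSum_abs' (x n)).tsum_eq] at h4
          have h5 : 0 ≤ ∑ i ∈ Finset.range N, |x n i| :=
            Finset.sum_nonneg fun i _ => abs_nonneg _
          linarith
        calc ∑' k, |x n (k + N)| * phiA A (z (k + N))
            ≤ (∑' k, |x n (k + N)|) * (D + ε') := by rw [← h2]; exact h1
          _ ≤ r * (D + ε') := mul_le_mul_of_nonneg_right ((h3.trans (hxr n)))
              (by linarith)
      have hhead : ∑ i ∈ Finset.range N, |x n i| * phiA A (z i) ≤
          ∑ i ∈ Finset.range N, |x n i| * C :=
        Finset.sum_le_sum fun i _ => mul_le_mul_of_nonneg_left (hC i) (abs_nonneg _)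
      linarith
    have hhead0 : Tendsto (fun n => ∑ i ∈ Finset.range N, |x n i| * C) atTop (nhds 0) := by
      have hterm : ∀ i ∈ Finset.range N, Tendsto (fun n => |x n i| * C) atTop (nhds 0) := by
        intro i _
        have := ((hp i).abs).mul_const C
        simpa using this
      have h := tendsto_finset_sum (Finset.range N) hterm
      simpa using h
    have hev2 : ∀ᶠ n in atTop, phiA A (T (x n)) ≤ r * (D + ε') + ε' := by
      filter_upwards [hhead0.eventually_le_const hε'] with n hn
      have := hbound n
      linarith
    have hcob : IsCoboundedUnder (· ≤ ·) atTop (fun n => phiA A (T (x n))) :=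
      isCoboundedUnder_le_of_eventually_le atTop
        (Eventually.of_forall fun n => phiA_nonneg A (T (x n)))
    have hL : Filter.limsup (fun n => phiA A (T (x n))) Filter.atTop ≤ r * (D + ε') + ε' :=
      limsup_le_of_le hcob hev2
    have hε'' : ε' * (r + 1) = ε := div_mul_cancel₀ ε (by linarith)
    nlinarith [hL]
  by_contra hcon
  push_neg at hcon
  have h1 := main ((Filter.limsup (fun n => phiA A (T (x n))) Filter.atTop - r * D) / 2)
    (by linarith)
  linarith
end

section
/- Let T : ℓ¹ → ℓ¹ be a continuous linear operator, let z_n = T(e_n) where (e_n) is the standard unit vector basis of ℓ¹, assume z = (z_n) is bounded, and let x = (x_n) be a bounded sequence in ℓ¹ with r = sup_n ‖x_n‖₁ that converges to zero pointwise on ℕ. Let y_n = T(x_n) and let δ > 0. Then every finite partition (A_i)_{i∈I} of ℕ with d_z(A_i) ≤ δ for each i ∈ I satisfies d_y(A_i) ≤ r·δ for each i ∈ I. -/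
open Filter Set

lemma l1_hasSum (f : lp (fun _ : ℕ => ℝ) 1) : HasSum (fun j => |f j|) ‖f‖ := by
  have := lp.hasSum_norm (p := 1) (by norm_num) f
  simpa using this

noncomputable def evalCLM (j : ℕ) : lp (fun _ : ℕ => ℝ) 1 →L[ℝ] ℝ :=
  LinearMap.mkContinuous
    { toFun := fun f => f j
      map_add' := fun f g => by simp [lp.coeFn_add]
      map_smul' := fun c f => by simp [lp.coeFn_smul] }
    1 (fun f => (by simpa using lp.norm_apply_le_norm one_ne_zero f j : |f j| ≤ 1 * ‖f‖))

lemma single_eq_smul (k : ℕ) (c : ℝ) :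
    lp.single (E := fun _ : ℕ => ℝ) 1 k c = c • lp.single 1 k 1 := by
  rw [← lp.single_smul]; norm_num

lemma expand (T : lp (fun _ : ℕ => ℝ) 1 →L[ℝ] lp (fun _ : ℕ => ℝ) 1)
    (f : lp (fun _ : ℕ => ℝ) 1) (j : ℕ) :
    HasSum (fun k => f k * (T (lp.single 1 k 1)) j) ((T f) j) := by
  haveI : Fact ((1:ENNReal) ≤ 1) := ⟨le_rfl⟩
  have h1 := lp.hasSum_single (p := 1) (by norm_num) f
  have h2 := ((evalCLM j).comp T).hasSum h1
  have : ∀ k, ((evalCLM j).comp T) (lp.single 1 k (f k))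
      = f k * (T (lp.single 1 k 1)) j := by
    intro k
    rw [ContinuousLinearMap.comp_apply, single_eq_smul, map_smul]
    simp [evalCLM, lp.coeFn_smul, LinearMap.mkContinuous_apply]
    exact Or.inl rfl
  rw [show (T f) j = ((evalCLM j).comp T) f from rfl]
  simpa only [this] using h2

lemma key_bound (T : lp (fun _ : ℕ => ℝ) 1 →L[ℝ] lp (fun _ : ℕ => ℝ) 1)
    (C : ℝ) (hC : ∀ k, ‖T (lp.single 1 k 1)‖ ≤ C)
    (f : lp (fun _ : ℕ => ℝ) 1) (A : Set ℕ) (N : ℕ) (b : ℝ) (hb : 0 ≤ b)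
    (hfN : ∀ k < N, f k = 0)
    (hg : ∀ k ≥ N, ∑' j : A, |(T (lp.single 1 k 1)) j| ≤ b) :
    ∑' j : A, |(T f) j| ≤ b * ‖f‖ := by
  set z : ℕ → lp (fun _ : ℕ => ℝ) 1 := fun k => T (lp.single 1 k 1) with hz
  set u : ℕ → ℝ := fun k => |f k| with hu
  have husum : Summable u := (l1_hasSum f).summable
  have huC : ∑' k, u k = ‖f‖ := (l1_hasSum f).tsum_eq
  have hzsum : ∀ k, Summable (fun j => |z k j|) := fun k => (l1_hasSum (z k)).summable
  have hzsumA : ∀ k, Summable (fun j : A => |z k j|) := fun k => (hzsum k).subtype A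
  have hTfA : Summable (fun j : A => |(T f) j|) := (l1_hasSum (T f)).summable.subtype A
  -- pointwise bound
  have hpt : ∀ j : ℕ, |(T f) j| ≤ ∑' k, u k * |z k j| := by
    intro j
    have hsum : Summable (fun k => |f k * z k j|) := by
      apply Summable.of_nonneg_of_le (fun k => abs_nonneg _) (fun k => ?_) (husum.mul_right C)
      rw [abs_mul]
      have hzC : |z k j| ≤ C := by
        simpa using (lp.norm_apply_le_norm one_ne_zero (z k) j).trans (hC k)
      exact mul_le_mul_of_nonneg_left hzC (abs_nonneg _)
    calc |(T f) j| = |∑' k, f k * z k j| := by rw [(expand T f j).tsum_eq]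
      _ ≤ ∑' k, |f k * z k j| := by
          simpa [abs_mul] using norm_tsum_le_tsum_norm (f := fun k => f k * z k j) (by simpa [abs_mul] using hsum)
      _ = ∑' k, u k * |z k j| := by simp [hu, abs_mul]
  -- now over ENNReal
  have hWsum : ∀ j : ℕ, Summable (fun k => u k * |z k j|) := by
    intro j
    apply Summable.of_nonneg_of_le (fun k => by positivity) (fun k => ?_) (husum.mul_right C)
    have hzC : |z k j| ≤ C := by
      simpa using (lp.norm_apply_le_norm one_ne_zero (z k) j).trans (hC k)
    exact mul_le_mul_of_nonneg_left hzC (abs_nonneg _)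
  have main : ENNReal.ofReal (∑' j : A, |(T f) j|) ≤ ENNReal.ofReal (b * ‖f‖) := by
    rw [ENNReal.ofReal_tsum_of_nonneg (fun j => abs_nonneg _) hTfA]
    calc ∑' j : A, ENNReal.ofReal |(T f) j|
        ≤ ∑' j : A, ∑' k, ENNReal.ofReal (u k * |z k j|) := by
          refine ENNReal.tsum_le_tsum fun j => ?_
          rw [← ENNReal.ofReal_tsum_of_nonneg (fun k => by positivity) (hWsum j)]
          exact ENNReal.ofReal_le_ofReal (hpt j)
      _ = ∑' k, ∑' j : A, ENNReal.ofReal (u k * |z k j|) := ENNReal.tsum_comm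
      _ = ∑' k, ENNReal.ofReal (u k * ∑' j : A, |z k j|) := by
          refine tsum_congr fun k => ?_
          rw [ENNReal.ofReal_mul (abs_nonneg _),
            ENNReal.ofReal_tsum_of_nonneg (fun j => abs_nonneg _) (hzsumA k),
            ← ENNReal.tsum_mul_left]
          exact tsum_congr fun j => ENNReal.ofReal_mul (abs_nonneg _)
      _ ≤ ∑' k, ENNReal.ofReal (u k * b) := by
          refine ENNReal.tsum_le_tsum fun k => ?_
          rcases lt_or_ge k N with hk | hk
          · simp [hu, hfN k hk]
          · exact ENNReal.ofReal_le_ofReal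
              (mul_le_mul_of_nonneg_left (hg k hk) (abs_nonneg _))
      _ = ENNReal.ofReal (b * ‖f‖) := by
          rw [← ENNReal.ofReal_tsum_of_nonneg (fun k => by positivity)
            (husum.mul_right b)]
          congr 1
          rw [tsum_mul_right, huC, mul_comm]
  have h0 : 0 ≤ ∑' j : A, |(T f) j| := tsum_nonneg fun j => abs_nonneg _
  exact (ENNReal.ofReal_le_ofReal_iff (by positivity)).mp main

theorem stmt_15 (T : lp (fun _ : ℕ => ℝ) 1 →L[ℝ] lp (fun _ : ℕ => ℝ) 1)
    (hz : IsBddSeq (fun n => T (lp.single 1 n 1)))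
    (x : ℕ → lp (fun _ : ℕ => ℝ) 1) (r : ℝ)
    (hbdd : BddAbove (Set.range fun n => ‖x n‖))
    (hr : r = ⨆ n, ‖x n‖)
    (hp : ∀ j : ℕ, Filter.Tendsto (fun n => x n j) Filter.atTop (nhds 0))
    (δ : ℝ) (hδ : 0 < δ)
    (m : ℕ) (A : Fin m → Set ℕ)
    (hcover : (⋃ i, A i) = Set.univ)
    (hdisj : Pairwise (Function.onFun Disjoint A))
    (hfine : ∀ i, dsub (fun n => T (lp.single 1 n 1)) (A i) ≤ δ) :
    ∀ i, dsub (fun n => T (x n)) (A i) ≤ r * δ := by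
  intro i
  obtain ⟨C, hC⟩ := hz
  have hxr : ∀ n, ‖x n‖ ≤ r := fun n => hr ▸ le_ciSup hbdd n
  have hr0 : 0 ≤ r := (norm_nonneg (x 0)).trans (hxr 0)
  set z : ℕ → lp (fun _ : ℕ => ℝ) 1 := fun k => T (lp.single 1 k 1) with hzdef
  set S : ℕ → ℝ := fun n => ∑' j : A i, |(T (x n)) j| with hS
  have hcob : Filter.IsCoboundedUnder (· ≤ ·) Filter.atTop S :=
    Filter.isCoboundedUnder_le_of_le Filter.atTop
      (x := 0) (fun n => tsum_nonneg fun j => abs_nonneg _)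
  have main : ∀ η : ℝ, 0 < η → dsub (fun n => T (x n)) (A i) ≤ r * δ + η := by
    intro η hη
    set ε : ℝ := η / (2 * (r + 1)) with hε
    have hε0 : 0 < ε := by positivity
    -- find N
    have hbound : Filter.IsBoundedUnder (· ≤ ·) Filter.atTop
        (fun k => ∑' j : A i, |z k j|) := by
      refine Filter.isBoundedUnder_of ⟨C, fun k => ?_⟩
      exact (Summable.tsum_subtype_le (fun j => |z k j|) (A i) (fun j => abs_nonneg _)
        (l1_hasSum (z k)).summable).trans (le_of_eq_of_le (l1_hasSum (z k)).tsum_eq (hC k))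
    have hev : ∀ᶠ k in Filter.atTop, (∑' j : A i, |z k j|) < δ + ε :=
      Filter.eventually_lt_of_limsup_lt (lt_of_le_of_lt (hfine i) (by linarith)) hbound
    obtain ⟨N, hN⟩ := Filter.eventually_atTop.1 hev
    -- decomposition
    set h : ℕ → lp (fun _ : ℕ => ℝ) 1 :=
      fun n => ∑ k ∈ Finset.range N, lp.single 1 k (x n k) with hhdef
    set t : ℕ → lp (fun _ : ℕ => ℝ) 1 := fun n => x n - h n with htdef
    have hcoeh : ∀ n j, (h n) j = if j ∈ Finset.range N then x n j else 0 := by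
      intro n j
      simp only [hhdef, lp.coeFn_sum, Finset.sum_apply, lp.single_apply]
      simp [Pi.single_apply]
    have hcoet : ∀ n j, (t n) j = if j ∈ Finset.range N then 0 else x n j := by
      intro n j
      have : (t n) j = x n j - (h n) j := by simp [htdef, lp.coeFn_sub]
      rw [this, hcoeh]
      split <;> simp
    have htnorm : ∀ n, ‖t n‖ ≤ ‖x n‖ := by
      intro n
      rw [← (l1_hasSum (t n)).tsum_eq, ← (l1_hasSum (x n)).tsum_eq]
      refine Summable.tsum_le_tsum (fun j => ?_) (l1_hasSum (t n)).summable (l1_hasSum (x n)).summable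
      rw [hcoet]
      split <;> simp [abs_nonneg]
    have hhnorm : ∀ n, ‖h n‖ = ∑ k ∈ Finset.range N, |x n k| := by
      intro n
      have := lp.norm_sum_single (p := 1) (by norm_num) (fun k => x n k) (Finset.range N)
      simpa using this
    -- tendsto
    have hh0 : Filter.Tendsto (fun n => ‖T‖ * ‖h n‖) Filter.atTop (nhds 0) := by
      have h1 : Filter.Tendsto (fun n => ‖h n‖) Filter.atTop (nhds 0) := by
        simp only [hhnorm]
        have : Filter.Tendsto (fun n => ∑ k ∈ Finset.range N, |x n k|) Filter.atTop
            (nhds (∑ k ∈ Finset.range N, |(0:ℝ)|)) :=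
          tendsto_finset_sum _ (fun k _ => (hp k).abs)
        simpa using this
      simpa using h1.const_mul ‖T‖
    have hev2 : ∀ᶠ n in Filter.atTop, ‖T‖ * ‖h n‖ < η / 2 :=
      hh0.eventually_lt_const (by positivity)
    -- per-n bound
    have hperN : ∀ n, S n ≤ ‖T‖ * ‖h n‖ + (δ + ε) * r := by
      intro n
      have hsplit : T (x n) = T (h n) + T (t n) := by
        rw [← map_add]; congr 1; simp [htdef]
      have hsum1 : Summable (fun j : A i => |(T (h n)) j|) :=
        (l1_hasSum (T (h n))).summable.subtype (A i)
      have hsum2 : Summable (fun j : A i => |(T (t n)) j|) :=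
        (l1_hasSum (T (t n))).summable.subtype (A i)
      have step1 : S n ≤ (∑' j : A i, |(T (h n)) j|) + ∑' j : A i, |(T (t n)) j| := by
        rw [← Summable.tsum_add hsum1 hsum2]
        refine Summable.tsum_le_tsum (fun j => ?_)
          ((l1_hasSum (T (x n))).summable.subtype (A i)) (hsum1.add hsum2)
        rw [hsplit]
        simpa [lp.coeFn_add] using abs_add_le ((T (h n)) j) ((T (t n)) j)
      have step2 : (∑' j : A i, |(T (h n)) j|) ≤ ‖T‖ * ‖h n‖ :=
        ((Summable.tsum_subtype_le (fun j => |(T (h n)) j|) (A i) (fun j => abs_nonneg _)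
          (l1_hasSum (T (h n))).summable).trans
          (le_of_eq_of_le (l1_hasSum (T (h n))).tsum_eq (T.le_opNorm (h n))))
      have step3 : (∑' j : A i, |(T (t n)) j|) ≤ (δ + ε) * r := by
        have := key_bound T C hC (t n) (A i) N (δ + ε) (by linarith)
          (fun k hk => by rw [hcoet]; simp [Finset.mem_range.2 hk])
          (fun k hk => (hN k hk).le)
        exact this.trans (mul_le_mul_of_nonneg_left ((htnorm n).trans (hxr n)) (by linarith))
      linarith
    have hevS : ∀ᶠ n in Filter.atTop, S n ≤ r * δ + η := by
      filter_upwards [hev2] with n hn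
      have h1 : S n ≤ ‖T‖ * ‖h n‖ + (δ + ε) * r := hperN n
      have h2 : ε * r ≤ η / 2 := by
        have : ε * (r + 1) = η / 2 := by rw [hε, div_mul_eq_mul_div, mul_div_mul_right _ _ (by linarith : r + 1 ≠ 0)]
        nlinarith
      nlinarith
    exact Filter.limsup_le_of_le hcob hevS
  by_contra hcon
  push_neg at hcon
  have := main ((dsub (fun n => T (x n)) (A i) - r * δ) / 2) (by linarith)
  linarith
end
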